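/- For an array A[1..n] in which all occurrences of equal elements appear consecutively, the array A can be uniquely reconstructed from the answers to all range q-th minimum queries RMin(i,j,q) and range q-th maximum queries RMax(i,j,q), up to order-isomorphism, provided A arises from a Baxter permutation with duplicated consecutive entries (i.e., A belongs to the family 𝒜_n). -/

import Mathlib

/-- `π` is (the extension by junk of) a Baxter permutation of `{1,…,m}`:
a bijection of `{1,…,m}` avoiding the patterns 2-41-3 and 3-14-2. -/
def IsBaxterPerm (m : ℕ) (π : ℕ → ℕ) : Prop :=
  Set.BijOn π (Set.Icc 1 m) (Set.Icc 1 m) ∧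
  (¬ ∃ p q r, 1 ≤ p ∧ p < q ∧ q + 1 < r ∧ r ≤ m ∧
      π (q + 1) < π p ∧ π p < π r ∧ π r < π q) ∧
  (¬ ∃ p q r, 1 ≤ p ∧ p < q ∧ q + 1 < r ∧ r ≤ m ∧
      π q < π r ∧ π r < π p ∧ π p < π (q + 1))

/-- Membership in the family `𝒜ₙ`: some `k` positions in `{2,…,n}` copy the value of their
left neighbour, and the remaining `n-k` positions carry a Baxter permutation in order. -/
def InFamilyA (n : ℕ) (A : ℕ → ℕ) : Prop :=
  ∃ K : Finset ℕ, K ⊆ Finset.Icc 2 n ∧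
    ∃ π : ℕ → ℕ, IsBaxterPerm (n - K.card) π ∧
      (∀ i, 2 ≤ i → i ≤ n → i ∈ K → A i = A (i - 1)) ∧
      (∀ i, 1 ≤ i → i ≤ n → i ∉ K →
        A i = π (((Finset.Icc 1 i).filter (fun t => t ∉ K)).card))

/-- positions of the minimum of `A[i..j]`, in increasing order. -/
def minOccs (A : ℕ → ℕ) (i j : ℕ) : List ℕ :=
  (List.range (j + 1)).filter (fun p => decide (i ≤ p ∧ ∀ t ∈ Finset.Icc i j, A p ≤ A t))

/-- positions of the maximum of `A[i..j]`, in increasing order. -/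
def maxOccs (A : ℕ → ℕ) (i j : ℕ) : List ℕ :=
  (List.range (j + 1)).filter (fun p => decide (i ≤ p ∧ ∀ t ∈ Finset.Icc i j, A t ≤ A p))

/-- `rmin A i j q`: position of the `q`-th leftmost occurrence of the minimum of `A[i..j]`
(the last occurrence if there are fewer than `q`). -/
def rmin (A : ℕ → ℕ) (i j q : ℕ) : ℕ :=
  (minOccs A i j).getD (min (q - 1) ((minOccs A i j).length - 1)) 0

/-- `rmax A i j q`: position of the `q`-th leftmost occurrence of the maximum of `A[i..j]`
(the last occurrence if there are fewer than `q`). -/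
def rmax (A : ℕ → ℕ) (i j q : ℕ) : ℕ :=
  (maxOccs A i j).getD (min (q - 1) ((maxOccs A i j).length - 1)) 0

namespace Stmt8Reco

/-! ### Rank function -/

def rk (K : Finset ℕ) (i : ℕ) : ℕ := ((Finset.Icc 1 i).filter (fun t => t ∉ K)).card

lemma rk_mono (K : Finset ℕ) {i j : ℕ} (h : i ≤ j) : rk K i ≤ rk K j :=
  Finset.card_le_card (Finset.filter_subset_filter _ (Finset.Icc_subset_Icc_right h))

lemma Icc_succ (j : ℕ) : Finset.Icc 1 (j + 1) = insert (j + 1) (Finset.Icc 1 j) := by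
  ext x; simp [Finset.mem_Icc]; omega

lemma rk_succ_mem (K : Finset ℕ) (j : ℕ) (h : j + 1 ∈ K) : rk K (j + 1) = rk K j := by
  unfold rk
  rw [Icc_succ, Finset.filter_insert, if_neg (by simpa using h)]

lemma rk_succ_not_mem (K : Finset ℕ) (j : ℕ) (h : j + 1 ∉ K) :
    rk K (j + 1) = rk K j + 1 := by
  unfold rk
  rw [Icc_succ, Finset.filter_insert, if_pos h,
    Finset.card_insert_of_notMem (by simp [Finset.mem_Icc])]

lemma rk_one (K : Finset ℕ) (h1 : 1 ∉ K) : rk K 1 = 1 := by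
  unfold rk
  rw [Finset.Icc_self, Finset.filter_singleton, if_pos h1, Finset.card_singleton]

lemma rk_ge_one (K : Finset ℕ) (h1 : 1 ∉ K) {i : ℕ} (hi : 1 ≤ i) : 1 ≤ rk K i :=
  le_trans (le_of_eq (rk_one K h1).symm) (rk_mono K hi)

lemma rk_top (n : ℕ) (K : Finset ℕ) (hK : K ⊆ Finset.Icc 2 n) :
    rk K n = n - K.card := by
  unfold rk
  have hsub : K ⊆ Finset.Icc 1 n := fun x hx => by
    have := Finset.mem_Icc.mp (hK hx)
    exact Finset.mem_Icc.mpr ⟨by omega, this.2⟩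
  rw [← Finset.sdiff_eq_filter, Finset.card_sdiff_of_subset hsub, Nat.card_Icc]
  omega

lemma rk_surj (n : ℕ) (K : Finset ℕ) (h1 : (1 : ℕ) ∉ K) :
    ∀ j, 1 ≤ j → ∀ a, 1 ≤ a → a ≤ rk K j → ∃ i, 1 ≤ i ∧ i ≤ j ∧ rk K i = a := by
  intro j
  induction j with
  | zero => intro h; omega
  | succ j ih =>
    intro hj a ha1 ha2
    by_cases hj0 : j = 0
    · subst hj0
      have h2 : rk K 1 = 1 := rk_one K h1
      have ha2' : a ≤ rk K 1 := by simpa using ha2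
      exact ⟨1, le_rfl, le_rfl, by omega⟩
    · by_cases hc : a ≤ rk K j
      · obtain ⟨i, h⟩ := ih (by omega) a ha1 hc
        exact ⟨i, h.1, by omega, h.2.2⟩
      · refine ⟨j + 1, by omega, le_rfl, ?_⟩
        have h2 : rk K (j + 1) ≤ rk K j + 1 := by
          by_cases hm : j + 1 ∈ K
          · rw [rk_succ_mem K j hm]; omega
          · rw [rk_succ_not_mem K j hm]
        omega

lemma A_eq {n : ℕ} {A : ℕ → ℕ} {K : Finset ℕ} {π : ℕ → ℕ}
    (hK : K ⊆ Finset.Icc 2 n)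
    (hcopy : ∀ i, 2 ≤ i → i ≤ n → i ∈ K → A i = A (i - 1))
    (hval : ∀ i, 1 ≤ i → i ≤ n → i ∉ K → A i = π (rk K i)) :
    ∀ i, 1 ≤ i → i ≤ n → A i = π (rk K i) := by
  intro i
  induction i using Nat.strong_induction_on with
  | _ i ih =>
    intro h1 h2
    by_cases hmem : i ∈ K
    · have hx := Finset.mem_Icc.mp (hK hmem)
      obtain ⟨j, rfl⟩ : ∃ j, i = j + 1 := ⟨i - 1, by omega⟩
      have e1 : A (j + 1) = A j := by simpa using hcopy (j + 1) hx.1 h2 hmem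
      have e2 := ih j (by omega) (by omega) (by omega)
      rw [e1, e2, rk_succ_mem K j hmem]
    · exact hval i h1 h2 hmem

lemma mem_K_iff {n : ℕ} {A : ℕ → ℕ} {K : Finset ℕ} {π : ℕ → ℕ}
    (hK : K ⊆ Finset.Icc 2 n)
    (hinj : Set.InjOn π (Set.Icc 1 (n - K.card)))
    (hcopy : ∀ i, 2 ≤ i → i ≤ n → i ∈ K → A i = A (i - 1))
    (hr : ∀ i, 1 ≤ i → i ≤ n → A i = π (rk K i))
    (j : ℕ) (h1 : 1 ≤ j) (hn : j + 1 ≤ n) :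
    (j + 1 ∈ K ↔ A (j + 1) = A j) := by
  have h1K : (1 : ℕ) ∉ K := fun h => by have := Finset.mem_Icc.mp (hK h); omega
  constructor
  · intro h
    have := hcopy (j + 1) (by have := Finset.mem_Icc.mp (hK h); omega) hn h
    simpa using this
  · intro h
    by_contra hmem
    have e := rk_succ_not_mem K j hmem
    have hA1 := hr (j + 1) (by omega) hn
    have hA0 := hr j h1 (by omega)
    have hb1 : rk K j ∈ Set.Icc 1 (n - K.card) :=
      Set.mem_Icc.mpr ⟨rk_ge_one K h1K h1, by
        rw [← rk_top n K hK]; exact rk_mono K (by omega)⟩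
    have hb2 : rk K (j + 1) ∈ Set.Icc 1 (n - K.card) :=
      Set.mem_Icc.mpr ⟨rk_ge_one K h1K (by omega), by
        rw [← rk_top n K hK]; exact rk_mono K hn⟩
    have : rk K (j + 1) = rk K j := hinj hb2 hb1 (by rw [← hA1, ← hA0, h])
    omega

/-! ### Decoding `rmin _ _ _ 1` and `rmax _ _ _ 1` -/

lemma mem_minOccs (A : ℕ → ℕ) (i j x : ℕ) :
    x ∈ minOccs A i j ↔ x < j + 1 ∧ (i ≤ x ∧ ∀ t ∈ Finset.Icc i j, A x ≤ A t) := by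
  simp [minOccs, List.mem_filter, List.mem_range]

lemma mem_maxOccs (A : ℕ → ℕ) (i j x : ℕ) :
    x ∈ maxOccs A i j ↔ x < j + 1 ∧ (i ≤ x ∧ ∀ t ∈ Finset.Icc i j, A t ≤ A x) := by
  simp [maxOccs, List.mem_filter, List.mem_range]

lemma minOccs_sorted (A : ℕ → ℕ) (i j : ℕ) : (minOccs A i j).Pairwise (· < ·) :=
  List.Pairwise.sublist List.filter_sublist List.pairwise_lt_range

lemma maxOccs_sorted (A : ℕ → ℕ) (i j : ℕ) : (maxOccs A i j).Pairwise (· < ·) :=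
  List.Pairwise.sublist List.filter_sublist List.pairwise_lt_range

lemma rmin_one_spec (A : ℕ → ℕ) (i j : ℕ) (hij : i ≤ j) :
    i ≤ rmin A i j 1 ∧ rmin A i j 1 ≤ j ∧
    (∀ t, i ≤ t → t ≤ j → A (rmin A i j 1) ≤ A t) ∧
    (∀ p, i ≤ p → p ≤ j → (∀ t, i ≤ t → t ≤ j → A p ≤ A t) → rmin A i j 1 ≤ p) := by
  have hex : ∃ p, i ≤ p ∧ p ≤ j ∧ ∀ t, i ≤ t → t ≤ j → A p ≤ A t := by
    obtain ⟨p0, hp0, hmin⟩ := Finset.exists_min_image (Finset.Icc i j) A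
      ⟨i, Finset.mem_Icc.mpr ⟨le_rfl, hij⟩⟩
    have h := Finset.mem_Icc.mp hp0
    exact ⟨p0, h.1, h.2, fun t ht1 ht2 => hmin t (Finset.mem_Icc.mpr ⟨ht1, ht2⟩)⟩
  classical
  set q0 := Nat.find hex with hq0def
  have hq0 := Nat.find_spec hex
  have hq0min : ∀ p, (i ≤ p ∧ p ≤ j ∧ ∀ t, i ≤ t → t ≤ j → A p ≤ A t) → q0 ≤ p :=
    fun p hp => Nat.find_min' hex hp
  have hq0mem : q0 ∈ minOccs A i j := by
    rw [mem_minOccs]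
    exact ⟨by omega, hq0.1, fun t ht =>
      hq0.2.2 t (Finset.mem_Icc.mp ht).1 (Finset.mem_Icc.mp ht).2⟩
  obtain ⟨a, l, hl⟩ : ∃ a l, minOccs A i j = a :: l := by
    cases h : minOccs A i j with
    | nil => rw [h] at hq0mem; simp at hq0mem
    | cons a l => exact ⟨a, l, rfl⟩
  have ha_mem : a ∈ minOccs A i j := by rw [hl]; exact List.mem_cons_self
  have ha_spec := (mem_minOccs A i j a).mp ha_mem
  have hq0a : q0 ≤ a := hq0min a ⟨ha_spec.2.1, by omega,
    fun t ht1 ht2 => ha_spec.2.2 t (Finset.mem_Icc.mpr ⟨ht1, ht2⟩)⟩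
  have haq0 : a ≤ q0 := by
    have hmem' : q0 ∈ a :: l := by rw [← hl]; exact hq0mem
    rcases List.mem_cons.mp hmem' with h | h
    · omega
    · have hpw := minOccs_sorted A i j
      rw [hl] at hpw
      exact le_of_lt ((List.pairwise_cons.mp hpw).1 q0 h)
  have haeq : a = q0 := le_antisymm haq0 hq0a
  have hrmin : rmin A i j 1 = q0 := by
    unfold rmin
    rw [hl]
    simpa using haeq
  rw [hrmin]
  exact ⟨hq0.1, hq0.2.1, hq0.2.2, fun p h1 h2 h3 => hq0min p ⟨h1, h2, h3⟩⟩

lemma rmax_one_spec (A : ℕ → ℕ) (i j : ℕ) (hij : i ≤ j) :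
    i ≤ rmax A i j 1 ∧ rmax A i j 1 ≤ j ∧
    (∀ t, i ≤ t → t ≤ j → A t ≤ A (rmax A i j 1)) ∧
    (∀ p, i ≤ p → p ≤ j → (∀ t, i ≤ t → t ≤ j → A t ≤ A p) → rmax A i j 1 ≤ p) := by
  have hex : ∃ p, i ≤ p ∧ p ≤ j ∧ ∀ t, i ≤ t → t ≤ j → A t ≤ A p := by
    obtain ⟨p0, hp0, hmax⟩ := Finset.exists_max_image (Finset.Icc i j) A
      ⟨i, Finset.mem_Icc.mpr ⟨le_rfl, hij⟩⟩
    have h := Finset.mem_Icc.mp hp0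
    exact ⟨p0, h.1, h.2, fun t ht1 ht2 => hmax t (Finset.mem_Icc.mpr ⟨ht1, ht2⟩)⟩
  classical
  set q0 := Nat.find hex with hq0def
  have hq0 := Nat.find_spec hex
  have hq0min : ∀ p, (i ≤ p ∧ p ≤ j ∧ ∀ t, i ≤ t → t ≤ j → A t ≤ A p) → q0 ≤ p :=
    fun p hp => Nat.find_min' hex hp
  have hq0mem : q0 ∈ maxOccs A i j := by
    rw [mem_maxOccs]
    exact ⟨by omega, hq0.1, fun t ht =>
      hq0.2.2 t (Finset.mem_Icc.mp ht).1 (Finset.mem_Icc.mp ht).2⟩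
  obtain ⟨a, l, hl⟩ : ∃ a l, maxOccs A i j = a :: l := by
    cases h : maxOccs A i j with
    | nil => rw [h] at hq0mem; simp at hq0mem
    | cons a l => exact ⟨a, l, rfl⟩
  have ha_mem : a ∈ maxOccs A i j := by rw [hl]; exact List.mem_cons_self
  have ha_spec := (mem_maxOccs A i j a).mp ha_mem
  have hq0a : q0 ≤ a := hq0min a ⟨ha_spec.2.1, by omega,
    fun t ht1 ht2 => ha_spec.2.2 t (Finset.mem_Icc.mpr ⟨ht1, ht2⟩)⟩
  have haq0 : a ≤ q0 := by
    have hmem' : q0 ∈ a :: l := by rw [← hl]; exact hq0mem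
    rcases List.mem_cons.mp hmem' with h | h
    · omega
    · have hpw := maxOccs_sorted A i j
      rw [hl] at hpw
      exact le_of_lt ((List.pairwise_cons.mp hpw).1 q0 h)
  have haeq : a = q0 := le_antisymm haq0 hq0a
  have hrmax : rmax A i j 1 = q0 := by
    unfold rmax
    rw [hl]
    simpa using haeq
  rw [hrmax]
  exact ⟨hq0.1, hq0.2.1, hq0.2.2, fun p h1 h2 h3 => hq0min p ⟨h1, h2, h3⟩⟩

lemma eq_pred_iff (A : ℕ → ℕ) (i : ℕ) :
    (A (i + 1) = A i) ↔ (rmin A i (i + 1) 1 = i ∧ rmax A i (i + 1) 1 = i) := by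
  obtain ⟨h1, h2, h3, h4⟩ := rmin_one_spec A i (i + 1) (by omega)
  obtain ⟨g1, g2, g3, g4⟩ := rmax_one_spec A i (i + 1) (by omega)
  constructor
  · intro h
    constructor
    · have := h4 i le_rfl (by omega) (by
        intro t ht1 ht2
        rcases (by omega : t = i ∨ t = i + 1) with rfl | rfl
        · exact le_rfl
        · omega)
      omega
    · have := g4 i le_rfl (by omega) (by
        intro t ht1 ht2
        rcases (by omega : t = i ∨ t = i + 1) with rfl | rfl
        · exact le_rfl
        · omega)
      omega
  · intro h
    obtain ⟨hm, hM⟩ := h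
    have a1 := h3 (i + 1) (by omega) le_rfl
    rw [hm] at a1
    have a2 := g3 (i + 1) (by omega) le_rfl
    rw [hM] at a2
    omega

/-! ### The core combinatorial lemmas -/

lemma lemL {m : ℕ} {f : ℕ → ℕ}
    (hav : ¬ ∃ p q r, 1 ≤ p ∧ p < q ∧ q + 1 < r ∧ r ≤ m ∧
      f q < f r ∧ f r < f p ∧ f p < f (q + 1))
    {p q i0 j0 : ℕ} (hp : 1 ≤ p) (hqm : q ≤ m)
    (hpi : p < i0) (hpj : p < j0) (hjq : j0 < q) (hij : i0 < j0)
    (hne : f p ≠ f q) (hnej : f j0 ≠ f p)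
    (hmin : ∀ d, p ≤ d → d ≤ q → f i0 ≤ f d)
    (hmax : ∀ d, p ≤ d → d ≤ q → f d ≤ f j0)
    (dich : ∀ t, p < t → t < q → f t < f q ∨ f p < f t) :
    f p < f q := by
  by_contra hcon
  have hqp : f q < f p := by omega
  have key : ∀ w, w ≤ j0 → i0 ≤ w → f p < f w →
      ∃ u, i0 ≤ u ∧ u < j0 ∧ f u < f q ∧ f p < f (u + 1) := by
    intro w
    induction w with
    | zero => intro _ h2 _; omega
    | succ w ih =>
      intro hw1 hw2 hw3
      by_cases hc : i0 ≤ w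
      · rcases dich w (by omega) (by omega) with hl | hh
        · exact ⟨w, hc, by omega, hl, hw3⟩
        · exact ih (by omega) hc hh
      · have hwi : w + 1 = i0 := by omega
        have h2 : f i0 ≤ f p := hmin p le_rfl (by omega)
        rw [hwi] at hw3
        omega
  have hj : f p < f j0 := by
    have := hmax p le_rfl (by omega)
    omega
  obtain ⟨u, hu1, hu2, hu3, hu4⟩ := key j0 le_rfl (le_of_lt hij) hj
  exact hav ⟨p, u, q, hp, by omega, by omega, hqm, hu3, hqp, hu4⟩

lemma lemL' {m : ℕ} {f : ℕ → ℕ}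
    (hav : ¬ ∃ p q r, 1 ≤ p ∧ p < q ∧ q + 1 < r ∧ r ≤ m ∧
      f (q + 1) < f p ∧ f p < f r ∧ f r < f q)
    {p q i0 j0 : ℕ} (hp : 1 ≤ p) (hqm : q ≤ m)
    (hpj : p < j0) (hiq : i0 < q) (hpi : p < i0) (hij : j0 < i0)
    (hne : f p ≠ f q) (hnei : f i0 ≠ f p)
    (hmin : ∀ d, p ≤ d → d ≤ q → f i0 ≤ f d)
    (hmax : ∀ d, p ≤ d → d ≤ q → f d ≤ f j0)
    (dich : ∀ t, p < t → t < q → f t < f p ∨ f q < f t) :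
    f q < f p := by
  by_contra hcon
  have hpq : f p < f q := by omega
  have key : ∀ w, w ≤ i0 → j0 ≤ w → f w < f p →
      ∃ u, j0 ≤ u ∧ u < i0 ∧ f q < f u ∧ f (u + 1) < f p := by
    intro w
    induction w with
    | zero => intro _ h2 _; omega
    | succ w ih =>
      intro hw1 hw2 hw3
      by_cases hc : j0 ≤ w
      · rcases dich w (by omega) (by omega) with hl | hh
        · exact ih (by omega) hc hl
        · exact ⟨w, hc, by omega, hh, hw3⟩
      · have hwj : w + 1 = j0 := by omega
        have h2 : f q ≤ f j0 := hmax q (by omega) le_rfl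
        rw [hwj] at hw3
        omega
  have hi : f i0 < f p := by
    have := hmin p le_rfl (by omega)
    omega
  obtain ⟨u, hu1, hu2, hu3, hu4⟩ := key i0 le_rfl (le_of_lt hij) hi
  exact hav ⟨p, u, q, hp, by omega, by omega, hqm, hu4, hpq, hu3⟩

lemma core {m : ℕ} {f g : ℕ → ℕ}
    (hfbax : IsBaxterPerm m f) (hgbax : IsBaxterPerm m g)
    (hmin : ∀ a b, 1 ≤ a → a ≤ b → b ≤ m → ∃ c,
      (a ≤ c ∧ c ≤ b ∧ ∀ d, a ≤ d → d ≤ b → f c ≤ f d) ∧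
      (a ≤ c ∧ c ≤ b ∧ ∀ d, a ≤ d → d ≤ b → g c ≤ g d))
    (hmax : ∀ a b, 1 ≤ a → a ≤ b → b ≤ m → ∃ c,
      (a ≤ c ∧ c ≤ b ∧ ∀ d, a ≤ d → d ≤ b → f d ≤ f c) ∧
      (a ≤ c ∧ c ≤ b ∧ ∀ d, a ≤ d → d ≤ b → g d ≤ g c)) :
    ∀ p q, 1 ≤ p → p < q → q ≤ m → (f p < f q ↔ g p < g q) := by
  have hfinj : ∀ x y, 1 ≤ x → x ≤ m → 1 ≤ y → y ≤ m → f x = f y → x = y :=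
    fun x y hx1 hx2 hy1 hy2 h =>
      hfbax.1.2.1 (Set.mem_Icc.mpr ⟨hx1, hx2⟩) (Set.mem_Icc.mpr ⟨hy1, hy2⟩) h
  have hginj : ∀ x y, 1 ≤ x → x ≤ m → 1 ≤ y → y ≤ m → g x = g y → x = y :=
    fun x y hx1 hx2 hy1 hy2 h =>
      hgbax.1.2.1 (Set.mem_Icc.mpr ⟨hx1, hx2⟩) (Set.mem_Icc.mpr ⟨hy1, hy2⟩) h
  suffices H : ∀ d p q, 1 ≤ p → p < q → q ≤ m → q - p ≤ d → (f p < f q ↔ g p < g q) by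
    exact fun p q h1 h2 h3 => H (q - p) p q h1 h2 h3 le_rfl
  intro d
  induction d with
  | zero => intro p q h1 h2 h3 h4; exfalso; omega
  | succ d IH =>
    intro p q h1 h2 h3 h4
    obtain ⟨i0, ⟨hfi1, hfi2, hfi3⟩, ⟨hgi1, hgi2, hgi3⟩⟩ :=
      hmin p q h1 (le_of_lt h2) h3
    obtain ⟨j0, ⟨hfj1, hfj2, hfj3⟩, ⟨hgj1, hgj2, hgj3⟩⟩ :=
      hmax p q h1 (le_of_lt h2) h3
    have hpm : p ≤ m := by omega
    have hfpq : f p ≠ f q := fun h => by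
      have := hfinj p q h1 hpm (by omega) h3 h; omega
    have hgpq : g p ≠ g q := fun h => by
      have := hginj p q h1 hpm (by omega) h3 h; omega
    by_cases hip : i0 = p
    · have h5 := hfi3 q (le_of_lt h2) le_rfl
      rw [hip] at h5
      have h6 := hgi3 q (le_of_lt h2) le_rfl
      rw [hip] at h6
      exact iff_of_true (by omega) (by omega)
    by_cases hiq : i0 = q
    · have h5 := hfi3 p le_rfl (le_of_lt h2)
      rw [hiq] at h5
      have h6 := hgi3 p le_rfl (le_of_lt h2)
      rw [hiq] at h6
      exact iff_of_false (by omega) (by omega)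
    by_cases hjp : j0 = p
    · have h5 := hfj3 q (le_of_lt h2) le_rfl
      rw [hjp] at h5
      have h6 := hgj3 q (le_of_lt h2) le_rfl
      rw [hjp] at h6
      exact iff_of_false (by omega) (by omega)
    by_cases hjq : j0 = q
    · have h5 := hfj3 p le_rfl (le_of_lt h2)
      rw [hjq] at h5
      have h6 := hgj3 p le_rfl (le_of_lt h2)
      rw [hjq] at h6
      exact iff_of_true (by omega) (by omega)
    have hpi : p < i0 := lt_of_le_of_ne hfi1 (Ne.symm hip)
    have hiq' : i0 < q := lt_of_le_of_ne hfi2 hiq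
    have hpj : p < j0 := lt_of_le_of_ne hfj1 (Ne.symm hjp)
    have hjq' : j0 < q := lt_of_le_of_ne hfj2 hjq
    by_cases hbt : ∃ t, p < t ∧ t < q ∧ ((f p < f t ∧ f t < f q) ∨ (f q < f t ∧ f t < f p))
    · obtain ⟨t, ht1, ht2, hc⟩ := hbt
      have e1 := IH p t h1 ht1 (by omega) (by omega)
      have e2 := IH t q (by omega) ht2 h3 (by omega)
      rcases hc with ⟨ha, hb⟩ | ⟨ha, hb⟩
      · have c1 := e1.mp ha
        have c2 := e2.mp hb
        exact iff_of_true (by omega) (by omega)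
      · have hgt1 : g p ≠ g t := fun h => by
          have := hginj p t h1 hpm (by omega) (by omega) h; omega
        have hgt2 : g t ≠ g q := fun h => by
          have := hginj t q (by omega) (by omega) (by omega) h3 h; omega
        have h5 : ¬ g p < g t := fun h => by have := e1.mpr h; omega
        have h6 : ¬ g t < g q := fun h => by have := e2.mpr h; omega
        exact iff_of_false (by omega) (by omega)
    by_cases hbg : ∃ t, p < t ∧ t < q ∧ ((g p < g t ∧ g t < g q) ∨ (g q < g t ∧ g t < g p))
    · obtain ⟨t, ht1, ht2, hc⟩ := hbg
      have e1 := IH p t h1 ht1 (by omega) (by omega)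
      have e2 := IH t q (by omega) ht2 h3 (by omega)
      rcases hc with ⟨ha, hb⟩ | ⟨ha, hb⟩
      · have c1 := e1.mpr ha
        have c2 := e2.mpr hb
        exact iff_of_true (by omega) (by omega)
      · have hft1 : f p ≠ f t := fun h => by
          have := hfinj p t h1 hpm (by omega) (by omega) h; omega
        have hft2 : f t ≠ f q := fun h => by
          have := hfinj t q (by omega) (by omega) (by omega) h3 h; omega
        have h5 : ¬ f p < f t := fun h => by have := e1.mp h; omega
        have h6 : ¬ f t < f q := fun h => by have := e2.mp h; omega
        exact iff_of_false (by omega) (by omega)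
    have dichf : ∀ t, p < t → t < q → f t < f q ∨ f p < f t := by
      intro t ht1 ht2
      have h5 : f t ≠ f p := fun h => by
        have := hfinj t p (by omega) (by omega) h1 hpm h; omega
      have h6 : f t ≠ f q := fun h => by
        have := hfinj t q (by omega) (by omega) (by omega) h3 h; omega
      by_contra hcc
      push_neg at hcc
      exact hbt ⟨t, ht1, ht2, Or.inr ⟨by omega, by omega⟩⟩
    have dichg : ∀ t, p < t → t < q → g t < g q ∨ g p < g t := by
      intro t ht1 ht2
      have h5 : g t ≠ g p := fun h => by
        have := hginj t p (by omega) (by omega) h1 hpm h; omega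
      have h6 : g t ≠ g q := fun h => by
        have := hginj t q (by omega) (by omega) (by omega) h3 h; omega
      by_contra hcc
      push_neg at hcc
      exact hbg ⟨t, ht1, ht2, Or.inr ⟨by omega, by omega⟩⟩
    have dichf' : ∀ t, p < t → t < q → f t < f p ∨ f q < f t := by
      intro t ht1 ht2
      have h5 : f t ≠ f p := fun h => by
        have := hfinj t p (by omega) (by omega) h1 hpm h; omega
      have h6 : f t ≠ f q := fun h => by
        have := hfinj t q (by omega) (by omega) (by omega) h3 h; omega
      by_contra hcc
      push_neg at hcc
      exact hbt ⟨t, ht1, ht2, Or.inl ⟨by omega, by omega⟩⟩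
    have dichg' : ∀ t, p < t → t < q → g t < g p ∨ g q < g t := by
      intro t ht1 ht2
      have h5 : g t ≠ g p := fun h => by
        have := hginj t p (by omega) (by omega) h1 hpm h; omega
      have h6 : g t ≠ g q := fun h => by
        have := hginj t q (by omega) (by omega) (by omega) h3 h; omega
      by_contra hcc
      push_neg at hcc
      exact hbg ⟨t, ht1, ht2, Or.inl ⟨by omega, by omega⟩⟩
    have hijne : i0 ≠ j0 := by
      intro h
      have h5 := hfi3 p le_rfl (le_of_lt h2)
      have h6 := hfj3 p le_rfl (le_of_lt h2)
      rw [h] at h5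
      have h7 : f p = f j0 := le_antisymm h6 h5
      have := hfinj p j0 h1 hpm (by omega) (by omega) h7
      exact hjp this.symm
    have hfnej : f j0 ≠ f p := fun h => by
      have := hfinj j0 p (by omega) (by omega) h1 hpm h; exact hjp this
    have hgnej : g j0 ≠ g p := fun h => by
      have := hginj j0 p (by omega) (by omega) h1 hpm h; exact hjp this
    have hfnei : f i0 ≠ f p := fun h => by
      have := hfinj i0 p (by omega) (by omega) h1 hpm h; exact hip this
    have hgnei : g i0 ≠ g p := fun h => by
      have := hginj i0 p (by omega) (by omega) h1 hpm h; exact hip this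
    rcases lt_or_gt_of_ne hijne with hlt | hgt
    · have hf := lemL hfbax.2.2 h1 h3 hpi hpj hjq' hlt hfpq hfnej hfi3 hfj3 dichf
      have hg := lemL hgbax.2.2 h1 h3 hpi hpj hjq' hlt hgpq hgnej hgi3 hgj3 dichg
      exact iff_of_true hf hg
    · have hf := lemL' hfbax.2.1 h1 h3 hpj hiq' hpi hgt hfpq hfnei hfi3 hfj3 dichf'
      have hg := lemL' hgbax.2.1 h1 h3 hpj hiq' hpi hgt hgpq hgnei hgi3 hgj3 dichg'
      exact iff_of_false (by omega) (by omega)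

end Stmt8Reco

open Stmt8Reco in
theorem stmt8 (n : ℕ) (hn : 2 ≤ n) (A B : ℕ → ℕ)
    (hA : InFamilyA n A) (hB : InFamilyA n B)
    (hq : ∀ i j q, 1 ≤ i → i ≤ j → j ≤ n → 1 ≤ q →
      rmin A i j q = rmin B i j q ∧ rmax A i j q = rmax B i j q) :
    ∀ i j, 1 ≤ i → i ≤ n → 1 ≤ j → j ≤ n →
      ((A i < A j ↔ B i < B j) ∧ (A i = A j ↔ B i = B j)) := by
  obtain ⟨KA, hKA, πA, hbaxA, hcopyA, hvalA⟩ := hA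
  obtain ⟨KB, hKB, πB, hbaxB, hcopyB, hvalB⟩ := hB
  have hvalA' : ∀ i, 1 ≤ i → i ≤ n → i ∉ KA → A i = πA (rk KA i) := hvalA
  have hvalB' : ∀ i, 1 ≤ i → i ≤ n → i ∉ KB → B i = πB (rk KB i) := hvalB
  have hrA : ∀ i, 1 ≤ i → i ≤ n → A i = πA (rk KA i) := A_eq hKA hcopyA hvalA'
  have hrB0 : ∀ i, 1 ≤ i → i ≤ n → B i = πB (rk KB i) := A_eq hKB hcopyB hvalB'
  -- K_A = K_B
  have hKeq : KA = KB := by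
    apply Finset.ext
    intro x
    constructor
    · intro hx
      have hx' := Finset.mem_Icc.mp (hKA hx)
      obtain ⟨j, rfl⟩ : ∃ j, x = j + 1 := ⟨x - 1, by omega⟩
      have hj1 : 1 ≤ j := by omega
      have hjn : j + 1 ≤ n := hx'.2
      have e1 : A (j + 1) = A j :=
        (mem_K_iff hKA hbaxA.1.2.1 hcopyA hrA j hj1 hjn).mp hx
      have e2 := (eq_pred_iff A j).mp e1
      have hqj := hq j (j + 1) 1 hj1 (by omega) hjn le_rfl
      have e3 : B (j + 1) = B j := (eq_pred_iff B j).mpr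
        (by rw [← hqj.1, ← hqj.2]; exact e2)
      exact (mem_K_iff hKB hbaxB.1.2.1 hcopyB hrB0 j hj1 hjn).mpr e3
    · intro hx
      have hx' := Finset.mem_Icc.mp (hKB hx)
      obtain ⟨j, rfl⟩ : ∃ j, x = j + 1 := ⟨x - 1, by omega⟩
      have hj1 : 1 ≤ j := by omega
      have hjn : j + 1 ≤ n := hx'.2
      have e1 : B (j + 1) = B j :=
        (mem_K_iff hKB hbaxB.1.2.1 hcopyB hrB0 j hj1 hjn).mp hx
      have e2 := (eq_pred_iff B j).mp e1
      have hqj := hq j (j + 1) 1 hj1 (by omega) hjn le_rfl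
      have e3 : A (j + 1) = A j := (eq_pred_iff A j).mpr
        (by rw [hqj.1, hqj.2]; exact e2)
      exact (mem_K_iff hKA hbaxA.1.2.1 hcopyA hrA j hj1 hjn).mpr e3
  subst hKeq
  set m := n - KA.card with hmdef
  have hrB : ∀ i, 1 ≤ i → i ≤ n → B i = πB (rk KA i) := hrB0
  have h1A : (1 : ℕ) ∉ KA := fun h => by
    have := Finset.mem_Icc.mp (hKA h); omega
  have hm1 : rk KA n = m := rk_top n KA hKA
  have hrkge : ∀ x, 1 ≤ x → 1 ≤ rk KA x := fun x hx => rk_ge_one KA h1A hx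
  have hrkle : ∀ x, x ≤ n → rk KA x ≤ m := fun x hx => hm1 ▸ rk_mono KA hx
  -- position function : least position with a given rank
  set posF : ℕ → ℕ := fun a => sInf {i | 1 ≤ i ∧ i ≤ n ∧ rk KA i = a} with hposF
  have hnonempty : ∀ a, 1 ≤ a → a ≤ m → {i | 1 ≤ i ∧ i ≤ n ∧ rk KA i = a}.Nonempty := by
    intro a ha1 ha2
    obtain ⟨t, h⟩ := rk_surj n KA h1A n (by omega) a ha1 (by rw [hm1]; exact ha2)
    exact ⟨t, h.1, h.2.1, h.2.2⟩
  have hposmem : ∀ a, 1 ≤ a → a ≤ m →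
      (1 ≤ posF a ∧ posF a ≤ n ∧ rk KA (posF a) = a) :=
    fun a ha1 ha2 => Nat.sInf_mem (hnonempty a ha1 ha2)
  have hposle : ∀ a x, 1 ≤ x → x ≤ n → rk KA x = a → posF a ≤ x :=
    fun a x h1 h2 h3 => Nat.sInf_le ⟨h1, h2, h3⟩
  have hposmono : ∀ a b, 1 ≤ a → a ≤ b → b ≤ m → posF a ≤ posF b := by
    intro a b ha1 hab hbm
    obtain ⟨t1, t2, t3⟩ := hposmem b (by omega) hbm
    obtain ⟨x, hx1, hx2, hx3⟩ := rk_surj n KA h1A (posF b) t1 a ha1 (by rw [t3]; exact hab)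
    exact le_trans (hposle a x hx1 (by omega) hx3) hx2
  have hcover : ∀ a b d, 1 ≤ a → a ≤ d → d ≤ b → b ≤ m →
      ∃ t, posF a ≤ t ∧ t ≤ posF b ∧ 1 ≤ t ∧ t ≤ n ∧ rk KA t = d := by
    intro a b d ha1 had hdb hbm
    obtain ⟨tb1, tb2, tb3⟩ := hposmem b (by omega) hbm
    obtain ⟨x, hx1, hx2, hx3⟩ := rk_surj n KA h1A (posF b) tb1 d (by omega)
      (by rw [tb3]; omega)
    have hxn : x ≤ n := le_trans hx2 tb2
    rcases le_or_gt (posF a) x with h | h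
    · exact ⟨x, h, hx2, hx1, hxn, hx3⟩
    · exfalso
      obtain ⟨ta1, ta2, ta3⟩ := hposmem a ha1 (by omega)
      have h5 : rk KA x ≤ a := by rw [← ta3]; exact rk_mono KA (le_of_lt h)
      have h6 : rk KA x = a := by omega
      exact absurd (hposle a x hx1 hxn h6) (not_le.mpr h)
  -- transfer: common argmin / argmax positions for πA and πB
  have hmin : ∀ a b, 1 ≤ a → a ≤ b → b ≤ m → ∃ c,
      (a ≤ c ∧ c ≤ b ∧ ∀ d, a ≤ d → d ≤ b → πA c ≤ πA d) ∧
      (a ≤ c ∧ c ≤ b ∧ ∀ d, a ≤ d → d ≤ b → πB c ≤ πB d) := by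
    intro a b ha hab hb
    obtain ⟨ia1, ia2, ia3⟩ := hposmem a ha (le_trans hab hb)
    obtain ⟨ib1, ib2, ib3⟩ := hposmem b (by omega) hb
    have hij : posF a ≤ posF b := hposmono a b ha hab hb
    obtain ⟨s1, s2, s3, _⟩ := rmin_one_spec A (posF a) (posF b) hij
    obtain ⟨t1, t2, t3, _⟩ := rmin_one_spec B (posF a) (posF b) hij
    have heq : rmin A (posF a) (posF b) 1 = rmin B (posF a) (posF b) 1 :=
      (hq (posF a) (posF b) 1 ia1 hij ib2 le_rfl).1
    rw [← heq] at t1 t2 t3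
    set p := rmin A (posF a) (posF b) 1 with hpdef
    have hp1 : 1 ≤ p := le_trans ia1 s1
    have hpn : p ≤ n := le_trans s2 ib2
    refine ⟨rk KA p, ⟨?_, ?_, ?_⟩, ⟨?_, ?_, ?_⟩⟩
    · rw [← ia3]; exact rk_mono KA s1
    · rw [← ib3]; exact rk_mono KA s2
    · intro d hd1 hd2
      obtain ⟨t, ht1, ht2, ht3, ht4, ht5⟩ := hcover a b d ha hd1 hd2 hb
      have e1 := hrA p hp1 hpn
      have e2 := hrA t ht3 ht4
      rw [← e1, ← ht5, ← e2]
      exact s3 t ht1 ht2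
    · rw [← ia3]; exact rk_mono KA s1
    · rw [← ib3]; exact rk_mono KA s2
    · intro d hd1 hd2
      obtain ⟨t, ht1, ht2, ht3, ht4, ht5⟩ := hcover a b d ha hd1 hd2 hb
      have e1 := hrB p hp1 hpn
      have e2 := hrB t ht3 ht4
      rw [← e1, ← ht5, ← e2]
      exact t3 t ht1 ht2
  have hmax : ∀ a b, 1 ≤ a → a ≤ b → b ≤ m → ∃ c,
      (a ≤ c ∧ c ≤ b ∧ ∀ d, a ≤ d → d ≤ b → πA d ≤ πA c) ∧
      (a ≤ c ∧ c ≤ b ∧ ∀ d, a ≤ d → d ≤ b → πB d ≤ πB c) := by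
    intro a b ha hab hb
    obtain ⟨ia1, ia2, ia3⟩ := hposmem a ha (le_trans hab hb)
    obtain ⟨ib1, ib2, ib3⟩ := hposmem b (by omega) hb
    have hij : posF a ≤ posF b := hposmono a b ha hab hb
    obtain ⟨s1, s2, s3, _⟩ := rmax_one_spec A (posF a) (posF b) hij
    obtain ⟨t1, t2, t3, _⟩ := rmax_one_spec B (posF a) (posF b) hij
    have heq : rmax A (posF a) (posF b) 1 = rmax B (posF a) (posF b) 1 :=
      (hq (posF a) (posF b) 1 ia1 hij ib2 le_rfl).2
    rw [← heq] at t1 t2 t3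
    set p := rmax A (posF a) (posF b) 1 with hpdef
    have hp1 : 1 ≤ p := le_trans ia1 s1
    have hpn : p ≤ n := le_trans s2 ib2
    refine ⟨rk KA p, ⟨?_, ?_, ?_⟩, ⟨?_, ?_, ?_⟩⟩
    · rw [← ia3]; exact rk_mono KA s1
    · rw [← ib3]; exact rk_mono KA s2
    · intro d hd1 hd2
      obtain ⟨t, ht1, ht2, ht3, ht4, ht5⟩ := hcover a b d ha hd1 hd2 hb
      have e1 := hrA p hp1 hpn
      have e2 := hrA t ht3 ht4
      rw [← e1, ← ht5, ← e2]
      exact s3 t ht1 ht2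
    · rw [← ia3]; exact rk_mono KA s1
    · rw [← ib3]; exact rk_mono KA s2
    · intro d hd1 hd2
      obtain ⟨t, ht1, ht2, ht3, ht4, ht5⟩ := hcover a b d ha hd1 hd2 hb
      have e1 := hrB p hp1 hpn
      have e2 := hrB t ht3 ht4
      rw [← e1, ← ht5, ← e2]
      exact t3 t ht1 ht2
  have hmain := core hbaxA hbaxB hmin hmax
  have injA : ∀ x y, 1 ≤ x → x ≤ m → 1 ≤ y → y ≤ m → πA x = πA y → x = y :=
    fun x y a b c d h =>
      hbaxA.1.2.1 (Set.mem_Icc.mpr ⟨a, b⟩) (Set.mem_Icc.mpr ⟨c, d⟩) h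
  have injB : ∀ x y, 1 ≤ x → x ≤ m → 1 ≤ y → y ≤ m → πB x = πB y → x = y :=
    fun x y a b c d h =>
      hbaxB.1.2.1 (Set.mem_Icc.mpr ⟨a, b⟩) (Set.mem_Icc.mpr ⟨c, d⟩) h
  have keylt : ∀ x y, 1 ≤ x → x ≤ m → 1 ≤ y → y ≤ m →
      (πA x < πA y ↔ πB x < πB y) := by
    intro x y hx1 hx2 hy1 hy2
    rcases lt_trichotomy x y with h | h | h
    · exact hmain x y hx1 h hy2
    · subst h; simp
    · have hrev := hmain y x hy1 h hx2
      have h1 : πA x ≠ πA y := fun hh => by have := injA x y hx1 hx2 hy1 hy2 hh; omega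
      have h2 : πB x ≠ πB y := fun hh => by have := injB x y hx1 hx2 hy1 hy2 hh; omega
      by_cases hc : πA y < πA x
      · have hb := hrev.mp hc
        exact iff_of_false (by omega) (by omega)
      · have hb : ¬ πB y < πB x := fun hh => hc (hrev.mpr hh)
        exact iff_of_true (by omega) (by omega)
  intro i j hi1 hi2 hj1 hj2
  have hai := hrA i hi1 hi2
  have haj := hrA j hj1 hj2
  have hbi := hrB i hi1 hi2
  have hbj := hrB j hj1 hj2
  have hrib : 1 ≤ rk KA i ∧ rk KA i ≤ m := ⟨hrkge i hi1, hrkle i hi2⟩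
  have hrjb : 1 ≤ rk KA j ∧ rk KA j ≤ m := ⟨hrkge j hj1, hrkle j hj2⟩
  constructor
  · rw [hai, haj, hbi, hbj]
    exact keylt (rk KA i) (rk KA j) hrib.1 hrib.2 hrjb.1 hrjb.2
  · rw [hai, haj, hbi, hbj]
    constructor
    · intro h
      have : rk KA i = rk KA j := injA _ _ hrib.1 hrib.2 hrjb.1 hrjb.2 h
      rw [this]
    · intro h
      have : rk KA i = rk KA j := injB _ _ hrib.1 hrib.2 hrjb.1 hrjb.2 h
      rw [this]
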